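/- arXiv:1711.05846 — 3 statements merged into one kernel-verified Lean document; each statement's English description precedes it below -/
import Mathlib

section
/- Let Q(X,Y,Z) = Y^4 + 5X^4 - 6X^2Y^2 + 6X^3Z + 26X^2YZ + 10XY^2Z - 10Y^3Z - 32X^2Z^2 - 40XYZ^2 + 24Y^2Z^2 + 32XZ^3 - 16YZ^3, viewed with integer coefficients. For every algebraically closed field K whose characteristic is neither 2 nor 13, the only common zero (a,b,c) ∈ K^3 of the three partial derivatives ∂Q/∂X, ∂Q/∂Y, ∂Q/∂Z (coefficients mapped to K via the canonical ring map ℤ → K) is (a,b,c) = (0,0,0). In other words, the plane quartic Q = 0 is smooth in every characteristic different from 2 and 13; in particular X_s(13) has a model with good reduction away from 2 and 13. -/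
open MvPolynomial

/-- The smooth plane quartic model of `X_s(13)`, as a homogeneous quartic with
integer coefficients in variables `X 0, X 1, X 2` (playing the roles of `X, Y, Z`). -/
noncomputable def Qs13Z : MvPolynomial (Fin 3) ℤ :=
  (X 1)^4 + 5*(X 0)^4 - 6*(X 0)^2*(X 1)^2 + 6*(X 0)^3*(X 2) + 26*(X 0)^2*(X 1)*(X 2)
    + 10*(X 0)*(X 1)^2*(X 2) - 10*(X 1)^3*(X 2) - 32*(X 0)^2*(X 2)^2
    - 40*(X 0)*(X 1)*(X 2)^2 + 24*(X 1)^2*(X 2)^2 + 32*(X 0)*(X 2)^3 - 16*(X 1)*(X 2)^3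

private lemma pd5 (i : Fin 3) : pderiv i (5 : MvPolynomial (Fin 3) ℤ) = 0 := by
  rw [show (5 : MvPolynomial (Fin 3) ℤ) = C 5 by simp, pderiv_C]
private lemma pd6 (i : Fin 3) : pderiv i (6 : MvPolynomial (Fin 3) ℤ) = 0 := by
  rw [show (6 : MvPolynomial (Fin 3) ℤ) = C 6 by simp, pderiv_C]
private lemma pd10 (i : Fin 3) : pderiv i (10 : MvPolynomial (Fin 3) ℤ) = 0 := by
  rw [show (10 : MvPolynomial (Fin 3) ℤ) = C 10 by simp, pderiv_C]
private lemma pd16 (i : Fin 3) : pderiv i (16 : MvPolynomial (Fin 3) ℤ) = 0 := by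
  rw [show (16 : MvPolynomial (Fin 3) ℤ) = C 16 by simp, pderiv_C]
private lemma pd24 (i : Fin 3) : pderiv i (24 : MvPolynomial (Fin 3) ℤ) = 0 := by
  rw [show (24 : MvPolynomial (Fin 3) ℤ) = C 24 by simp, pderiv_C]
private lemma pd26 (i : Fin 3) : pderiv i (26 : MvPolynomial (Fin 3) ℤ) = 0 := by
  rw [show (26 : MvPolynomial (Fin 3) ℤ) = C 26 by simp, pderiv_C]
private lemma pd32 (i : Fin 3) : pderiv i (32 : MvPolynomial (Fin 3) ℤ) = 0 := by
  rw [show (32 : MvPolynomial (Fin 3) ℤ) = C 32 by simp, pderiv_C]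
private lemma pd40 (i : Fin 3) : pderiv i (40 : MvPolynomial (Fin 3) ℤ) = 0 := by
  rw [show (40 : MvPolynomial (Fin 3) ℤ) = C 40 by simp, pderiv_C]

/-- Over every algebraically closed field of characteristic different from 2 and 13,
the three partial derivatives of the quartic `Q` have no common zero other than the
origin: the plane quartic model of `X_s(13)` is smooth away from 2 and 13. -/
theorem Xs13_smooth_away_from_2_13 (K : Type*) [Field K] [IsAlgClosed K]
    (h2 : ringChar K ≠ 2) (h13 : ringChar K ≠ 13) (a b c : K)
    (h : ∀ i : Fin 3,
      MvPolynomial.eval ![a, b, c]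
        (MvPolynomial.map (Int.castRingHom K) (MvPolynomial.pderiv i Qs13Z)) = 0) :
    a = 0 ∧ b = 0 ∧ c = 0 := by
  -- basic non-vanishing of 2 and 13 in K
  have h2' : (2 : K) ≠ 0 := by
    intro h0
    have hdvd : ringChar K ∣ 2 := (ringChar.spec K 2).mp (by exact_mod_cast h0)
    rcases (Nat.prime_two.eq_one_or_self_of_dvd _ hdvd) with hh | hh
    · exact (CharP.ringChar_ne_one (R := K)) hh
    · exact h2 hh
  have h13' : (13 : K) ≠ 0 := by
    intro h0
    have hdvd : ringChar K ∣ 13 := (ringChar.spec K 13).mp (by exact_mod_cast h0)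
    rcases ((by norm_num : Nat.Prime 13).eq_one_or_self_of_dvd _ hdvd) with hh | hh
    · exact (CharP.ringChar_ne_one (R := K)) hh
    · exact h13 hh
  -- extract the three partial derivatives as explicit polynomial equations
  have hA := h 0
  have hB := h 1
  have hC := h 2
  simp [Qs13Z, pd5, pd6, pd10, pd16, pd24, pd26, pd32, pd40] at hA hB hC
  have hA' : 20*a^3 - 12*a*b^2 + 18*a^2*c + 52*a*b*c + 10*b^2*c - 64*a*c^2 - 40*b*c^2
      + 32*c^3 = 0 := by linear_combination hA
  have hB' : -12*a^2*b + 4*b^3 + 26*a^2*c + 20*a*b*c - 30*b^2*c - 40*a*c^2 + 48*b*c^2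
      - 16*c^3 = 0 := by linear_combination hB
  have hC' : 6*a^3 + 26*a^2*b + 10*a*b^2 - 10*b^3 - 64*a^2*c - 80*a*b*c + 48*b^2*c
      + 96*a*c^2 - 48*b*c^2 = 0 := by linear_combination hC
  -- Nullstellensatz certificate: 3328 * c^7 lies in the ideal of the partials
  have hc7 : (3328 : K) * c^7 = 0 := by
    linear_combination
      ((42528)*c^4 + (-80360)*b*c^3 + (-5370)*b^2*c^2 + (26956)*b^3*c + (-2912)*b^4 + (64328)*a*c^3 + (30910)*a*b*c^2 + (-21244)*a*b^2*c + (-1808)*a*b^3 + (-68712)*a^2*c^2 + (18846)*a^2*b*c + (9179)*a^2*b^2 + (13534)*a^3*c + (-9688)*a^3*b + (-651)*a^4) * hA' +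
      ((84848)*c^4 + (-65584)*b*c^3 + (-72052)*b^2*c^2 + (58017)*b^3*c + (-9065)*b^4 + (-147400)*a*c^3 + (79638)*a*b*c^2 + (3825)*a*b^2*c + (-15516)*a*b^3 + (73570)*a^2*c^2 + (-55887)*a^2*b*c + (30505)*a^2*b^2 + (33481)*a^3*c + (48660)*a^3*b + (-5408)*a^4) * hB' +
      ((17696)*c^4 + (-4654)*b*c^3 + (-45967)*b^2*c^2 + (30085)*b^3*c + (-3626)*b^4 + (-2522)*a*c^3 + (3144)*a*b*c^2 + (9321)*a*b^2*c + (-6338)*a*b^3 + (2127)*a^2*c^2 + (-11087)*a^2*b*c + (9484)*a^2*b^2 + (3421)*a^3*c + (12074)*a^3*b + (2170)*a^4) * hC'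
  have h3328 : (3328 : K) ≠ 0 := by
    have : (3328 : K) = 2^8 * 13 := by norm_num
    rw [this]
    exact mul_ne_zero (pow_ne_zero _ h2') h13'
  have hc : c = 0 := by
    have := (mul_eq_zero.mp hc7).resolve_left h3328
    exact pow_eq_zero_iff (by norm_num) |>.mp this
  subst hc
  -- now c = 0; from hB' : 4 b (b^2 - 3 a^2) = 0
  have hb4 : (4 : K) * (b * (b^2 - 3*a^2)) = 0 := by linear_combination hB'
  have h4 : (4 : K) ≠ 0 := by
    have : (4 : K) = 2^2 := by norm_num
    rw [this]; exact pow_ne_zero _ h2'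
  have hbb := (mul_eq_zero.mp hb4).resolve_left h4
  rcases mul_eq_zero.mp hbb with hb | hb
  · -- b = 0 : then 20 a^3 = 0 and 6 a^3 = 0, so 2 a^3 = 0
    have ha2 : (2 : K) * a^3 = 0 := by linear_combination hA' - 3*hC' + (42*a*b + 78*a^2 - 30*b^2)*hb
    have ha3 : a^3 = 0 := (mul_eq_zero.mp ha2).resolve_left h2'
    have ha : a = 0 := pow_eq_zero_iff (by norm_num) |>.mp ha3
    exact ⟨ha, hb, rfl⟩
  · -- b^2 = 3 a^2 : then hA' gives -16 a^3 = 0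
    have ha16 : (16 : K) * a^3 = 0 := by linear_combination (-1)*hA' - 12*a*hb
    have h16 : (16 : K) ≠ 0 := by
      have : (16 : K) = 2^4 := by norm_num
      rw [this]; exact pow_ne_zero _ h2'
    have ha3 : a^3 = 0 := (mul_eq_zero.mp ha16).resolve_left h16
    have ha : a = 0 := pow_eq_zero_iff (by norm_num) |>.mp ha3
    have hb2 : b^2 = 0 := by linear_combination hb + 3*a*ha
    exact ⟨ha, pow_eq_zero_iff (by norm_num) |>.mp hb2, rfl⟩
end

section
/- Let R be a commutative ring equipped with a derivation d : R → R, extended entrywise to vectors and matrices over R. Let n ≥ 1, let F, Z be n×n matrices over R with dF = 0 and dZ = 0, and let p ∈ R with dp = 0 and F^T·Z·F = p·Z. Let ω, f, g be column vectors in R^n and η, η_φ, h ∈ R satisfy dg^T = df^T·Z·F and dh = ω^T·F^T·Z·f + df^T·Z·f - g^T·ω + η_φ - p·η. Define the (n+2)×(n+2) block matrices Λ = -[[0,0,0],[ω,0,0],[η, ω^T Z, 0]], Λ_φ = -[[0,0,0],[Fω + df,0,0],[η_φ, (Fω + df)^T Z, 0]] (blocks of sizes 1, n, 1), and G = [[1,0,0],[f,F,0],[h,g^T,p]].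 Then Λ_φ·G + dG = G·Λ. (This is the gauge-transformation identity defining the Frobenius structure on the universal connection A_Z, where φ*ω = Fω + df and φ*η = η_φ.) -/
open Matrix

/-- A `(1 + n + 1) × (1 + n + 1)` block matrix with scalar corner blocks, given by its
nine blocks (of sizes `1`, `n`, `1`). -/
def blk3 {R : Type*} (n : ℕ)
    (a11 : R) (a12 : Fin n → R) (a13 : R)
    (a21 : Fin n → R) (a22 : Matrix (Fin n) (Fin n) R) (a23 : Fin n → R)
    (a31 : R) (a32 : Fin n → R) (a33 : R) :
    Matrix (Fin 1 ⊕ (Fin n ⊕ Fin 1)) (Fin 1 ⊕ (Fin n ⊕ Fin 1)) R :=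
  Matrix.of fun i j =>
    match i, j with
    | Sum.inl _, Sum.inl _ => a11
    | Sum.inl _, Sum.inr (Sum.inl k) => a12 k
    | Sum.inl _, Sum.inr (Sum.inr _) => a13
    | Sum.inr (Sum.inl k), Sum.inl _ => a21 k
    | Sum.inr (Sum.inl k), Sum.inr (Sum.inl l) => a22 k l
    | Sum.inr (Sum.inl k), Sum.inr (Sum.inr _) => a23 k
    | Sum.inr (Sum.inr _), Sum.inl _ => a31
    | Sum.inr (Sum.inr _), Sum.inr (Sum.inl k) => a32 k
    | Sum.inr (Sum.inr _), Sum.inr (Sum.inr _) => a33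


private lemma gauge_aux1 {R : Type*} [CommRing R] {n : ℕ} (F Z : Matrix (Fin n) (Fin n) R)
    (p : R) (ω df : Fin n → R) (j : Fin n)
    (hFZF' : ∀ k l, ∑ a, (∑ b, F b k * Z b a) * F a l = p * Z k l) :
    ∑ x, (∑ x1, (∑ y, F x1 y * ω y + df x1) * Z x1 x) * F x j
      = p * ∑ l, ω l * Z l j + ∑ i, ∑ jj, df i * Z i jj * F jj j := by
  have e1 : ∑ x, (∑ x1, (∑ y, F x1 y * ω y + df x1) * Z x1 x) * F x j
      = ∑ y, ω y * ((∑ a, (∑ b, F b y * Z b a) * F a j))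
        + ∑ i, ∑ jj, df i * Z i jj * F jj j := by
    simp only [add_mul, Finset.sum_mul, Finset.mul_sum, Finset.sum_add_distrib]
    congr 1
    · rw [Finset.sum_congr rfl fun x _ => Finset.sum_comm
        (f := fun x1 y => F x1 y * ω y * Z x1 x * F x j), Finset.sum_comm]
      refine Finset.sum_congr rfl fun y _ => Finset.sum_congr rfl fun a _ =>
        Finset.sum_congr rfl fun b _ => by ring
    · rw [Finset.sum_comm]
  rw [e1]
  simp only [hFZF', Finset.mul_sum]
  congr 1
  exact Finset.sum_congr rfl fun y _ => by ring

private lemma gauge_aux2 {R : Type*} [CommRing R] {n : ℕ} (F Z : Matrix (Fin n) (Fin n) R)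
    (ω df f : Fin n → R) :
    ∑ x, (∑ x1, ((∑ y, F x1 y * ω y) * Z x1 x + df x1 * Z x1 x)) * f x
      = ∑ x, ω x * ∑ x1, (∑ x2, F x2 x * Z x2 x1) * f x1
        + ∑ x, df x * ∑ x1, Z x x1 * f x1 := by
  simp only [Finset.sum_mul, Finset.mul_sum, add_mul, Finset.sum_add_distrib]
  congr 1
  · rw [Finset.sum_congr rfl fun x _ => Finset.sum_comm
      (f := fun x1 y => F x1 y * ω y * Z x1 x * f x), Finset.sum_comm]
    refine Finset.sum_congr rfl fun y _ => Finset.sum_congr rfl fun x _ =>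
      Finset.sum_congr rfl fun x1 _ => by ring
  · rw [Finset.sum_comm]
    exact Finset.sum_congr rfl fun x _ => Finset.sum_congr rfl fun x1 _ => by ring

/-- The gauge-transformation identity `Λ_φ·G + dG = G·Λ` defining the Frobenius
structure on the universal connection `A_Z`, where `φ*ω = Fω + df`, `φ*η = η_φ`,
`F^T·Z·F = p·Z`, `dg^T = df^T·Z·F` and
`dh = ω^T F^T Z f + df^T Z f - g^T ω + η_φ - p·η`. -/
theorem frobenius_structure_gauge_identity {R : Type*} [CommRing R]
    (d : R → R) (hd_add : ∀ a b : R, d (a + b) = d a + d b)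
    (hd_mul : ∀ a b : R, d (a * b) = a * d b + d a * b)
    (n : ℕ) (hn : 1 ≤ n)
    (F Z : Matrix (Fin n) (Fin n) R)
    (hdF : ∀ i j, d (F i j) = 0) (hdZ : ∀ i j, d (Z i j) = 0)
    (p : R) (hdp : d p = 0)
    (hFZF : Fᵀ * Z * F = p • Z)
    (ω f g : Fin n → R) (η ηφ h : R)
    (hg : ∀ k, d (g k) = ∑ i, ∑ j, d (f i) * Z i j * F j k)
    (hh : d h = ω ⬝ᵥ (Fᵀ * Z).mulVec f + (fun i => d (f i)) ⬝ᵥ Z.mulVec f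
            - g ⬝ᵥ ω + ηφ - p * η) :
    let φω : Fin n → R := fun k => F.mulVec ω k + d (f k)
    let Λ := -(blk3 n 0 (fun _ => 0) 0 ω 0 (fun _ => 0) η (fun k => ∑ l, ω l * Z l k) 0)
    let Λφ := -(blk3 n 0 (fun _ => 0) 0 φω 0 (fun _ => 0) ηφ
                  (fun k => ∑ l, φω l * Z l k) 0)
    let G := blk3 n 1 (fun _ => 0) 0 f F (fun _ => 0) h g p
    Λφ * G + Matrix.of (fun i j => d (G i j)) = G * Λ := by
  intro φω Λ Λφ G
  have hd0 : d (0:R) = 0 := by have := hd_add 0 0; simpa using this.symm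
  have hd1 : d (1:R) = 0 := by have := hd_mul 1 1; simpa using this
  have hFZF' : ∀ k l, ∑ a, (∑ b, F b k * Z b a) * F a l = p * Z k l := by
    intro k l
    have := congrFun (congrFun hFZF k) l
    simpa [Matrix.mul_apply, Matrix.transpose_apply, smul_eq_mul] using this
  ext i j
  obtain (i | i | i) := i <;> obtain (j | j | j) := j <;>
    simp [Λ, Λφ, G, φω, blk3, Matrix.mul_apply, Fintype.sum_sum_type,
      hd0, hd1, hdF, hdp, hh, hg, mulVec, dotProduct]
  · simp only [add_mul]
    rw [gauge_aux2 F Z ω (fun k => d (f k)) f]; ring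
  · rw [gauge_aux1 F Z p ω (fun k => d (f k)) j hFZF']; ring
end

section
/- Let p be a prime and define the formal integration operator ∫ on power series over ℚ_p by ∫(Σ_{k≥0} a_k t^k) = Σ_{k≥0} a_k t^{k+1}/(k+1). If F, H ∈ ℚ_p⟦t⟧ have all coefficients of p-adic valuation ≥ 0, then for every n ≥ 1: (i) the n-th coefficient of ∫F has p-adic valuation ≥ -⌊log_p(n)⌋, and (ii) the n-th coefficient of the iterated integral ∫(F · ∫H) has p-adic valuation ≥ -2·⌊log_p(n)⌋. -/
/-- The formal integration operator on power series:
`∫(Σ a_k t^k) = Σ a_k t^(k+1)/(k+1)`. -/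
noncomputable def formalInt {p : ℕ} [Fact p.Prime] (F : PowerSeries ℚ_[p]) :
    PowerSeries ℚ_[p] :=
  PowerSeries.mk fun n => if n = 0 then 0 else PowerSeries.coeff (R := ℚ_[p]) (n - 1) F / n

lemma norm_inv_natCast_le {p : ℕ} [Fact p.Prime] (n : ℕ) (hn : 1 ≤ n) :
    ‖((n : ℚ_[p]))‖⁻¹ ≤ (p : ℝ) ^ (Nat.log p n) := by
  have hn0 : (n : ℚ_[p]) ≠ 0 := Nat.cast_ne_zero.mpr (by omega)
  rw [Padic.norm_eq_zpow_neg_valuation hn0, Padic.valuation_natCast, ← zpow_neg, neg_neg, ← zpow_natCast]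
  have hp : (1:ℝ) ≤ p := by exact_mod_cast (Fact.out : p.Prime).one_le
  exact zpow_le_zpow_right₀ hp (by exact_mod_cast padicValNat_le_nat_log n)

lemma coeff_formalInt {p : ℕ} [Fact p.Prime] (G : PowerSeries ℚ_[p]) (n : ℕ) (hn : 1 ≤ n) :
    PowerSeries.coeff (R := ℚ_[p]) n (formalInt G) = PowerSeries.coeff (R := ℚ_[p]) (n - 1) G / n := by
  simp [formalInt, Nat.one_le_iff_ne_zero.mp hn]

lemma norm_coeff_formalInt_le {p : ℕ} [Fact p.Prime] (G : PowerSeries ℚ_[p]) (C : ℝ)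
    (hG : ∀ k, ‖PowerSeries.coeff (R := ℚ_[p]) k G‖ ≤ C) (n : ℕ) (hn : 1 ≤ n) :
    ‖PowerSeries.coeff (R := ℚ_[p]) n (formalInt G)‖ ≤ C * (p : ℝ) ^ (Nat.log p n) := by
  rw [coeff_formalInt G n hn, div_eq_mul_inv, norm_mul, norm_inv]
  exact mul_le_mul (hG _) (norm_inv_natCast_le n hn)
    (inv_nonneg.mpr (norm_nonneg _)) (le_trans (norm_nonneg _) (hG 0))

/-- If `F` and `H` have `p`-adically integral coefficients, then for `n ≥ 1` the `n`-th
coefficient of `∫F` has valuation `≥ -⌊log_p n⌋` (norm `≤ p^⌊log_p n⌋`), and the `n`-th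
coefficient of the double integral `∫(F·∫H)` has valuation `≥ -2⌊log_p n⌋`
(norm `≤ p^(2⌊log_p n⌋)`). -/
theorem coleman_integral_coefficient_bounds (p : ℕ) [Fact p.Prime]
    (F H : PowerSeries ℚ_[p])
    (hF : ∀ k, ‖PowerSeries.coeff (R := ℚ_[p]) k F‖ ≤ 1)
    (hH : ∀ k, ‖PowerSeries.coeff (R := ℚ_[p]) k H‖ ≤ 1) :
    ∀ n : ℕ, 1 ≤ n →
      ‖PowerSeries.coeff (R := ℚ_[p]) n (formalInt F)‖ ≤ (p : ℝ) ^ (Nat.log p n) ∧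
      ‖PowerSeries.coeff (R := ℚ_[p]) n (formalInt (F * formalInt H))‖
        ≤ (p : ℝ) ^ (2 * Nat.log p n) := by
  intro n hn
  have hppos : (0:ℝ) ≤ (p : ℝ) ^ (Nat.log p n) := by positivity
  constructor
  · simpa using norm_coeff_formalInt_le F 1 hF n hn
  · -- coefficients of F * formalInt H are bounded by p ^ Nat.log p n... for indices ≤ n-1
    have key : ∀ m : ℕ, m ≤ n → ‖PowerSeries.coeff (R := ℚ_[p]) m (F * formalInt H)‖
        ≤ (p : ℝ) ^ (Nat.log p n) := by
      intro m hm
      rw [PowerSeries.coeff_mul]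
      refine IsUltrametricDist.norm_sum_le_of_forall_le_of_nonneg hppos ?_
      rintro ⟨i, j⟩ hij
      rw [Finset.HasAntidiagonal.mem_antidiagonal] at hij
      rcases Nat.eq_zero_or_pos j with rfl | hj
      · simp [formalInt]
      · have h1 : ‖PowerSeries.coeff (R := ℚ_[p]) j (formalInt H)‖ ≤ (p:ℝ) ^ (Nat.log p j) := by
          simpa using norm_coeff_formalInt_le H 1 hH j hj
        have h2 : (p:ℝ) ^ (Nat.log p j) ≤ (p:ℝ) ^ (Nat.log p n) := by
          have hp : (1:ℝ) ≤ p := by exact_mod_cast (Fact.out : p.Prime).one_le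
          exact pow_le_pow_right₀ hp (Nat.log_mono_right (by omega))
        calc ‖PowerSeries.coeff (R := ℚ_[p]) i F * PowerSeries.coeff (R := ℚ_[p]) j (formalInt H)‖
            = ‖PowerSeries.coeff (R := ℚ_[p]) i F‖ * ‖PowerSeries.coeff (R := ℚ_[p]) j (formalInt H)‖ :=
              norm_mul _ _
          _ ≤ 1 * ((p:ℝ) ^ (Nat.log p n)) := mul_le_mul (hF i) (h1.trans h2)
              (norm_nonneg _) zero_le_one
          _ = (p:ℝ) ^ (Nat.log p n) := one_mul _
    rw [coeff_formalInt _ n hn, div_eq_mul_inv, norm_mul, norm_inv]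
    calc ‖PowerSeries.coeff (R := ℚ_[p]) (n-1) (F * formalInt H)‖ * ‖((n : ℚ_[p]))‖⁻¹
        ≤ (p:ℝ) ^ (Nat.log p n) * (p:ℝ) ^ (Nat.log p n) :=
          mul_le_mul (key (n-1) (by omega)) (norm_inv_natCast_le n hn)
            (inv_nonneg.mpr (norm_nonneg _)) hppos
      _ = (p:ℝ) ^ (2 * Nat.log p n) := by rw [two_mul, pow_add]
end
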